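/- arXiv:1312.5408 — 10 statements merged into one kernel-verified Lean document; each statement's English description precedes it below -/
import Mathlib

section
/- Let X be a collection of random variables on a common probability space taking values in a common state space. Define δ(A), for finite A ⊆ X, to be the probability that the random variables in A do not all take the same value. Then (X, δ) is a diversity. -/
open MeasureTheory

/-- The S-diversity: `δ(A)` is the probability that the random variables indexed by
`A` do not all take the same value. -/
noncomputable def sDiv {Ω S ι : Type*} [MeasurableSpace Ω] (μ : Measure Ω)
    (f : ι → Ω → S) (A : Finset ι) : ℝ :=
  (μ {ω | ¬ ∀ i ∈ A, ∀ j ∈ A, f i ω = f j ω}).toReal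

/-- the S-diversity of a family of random variables on a common
probability space is a diversity. -/
theorem sDiv_is_diversity {Ω S ι : Type*} [MeasurableSpace Ω] (μ : Measure Ω)
    [IsProbabilityMeasure μ] [DecidableEq ι] (f : ι → Ω → S)
    (hmeas : ∀ i j : ι, MeasurableSet {ω | f i ω = f j ω}) :
    (∀ A : Finset ι, 0 ≤ sDiv μ f A) ∧
    (∀ A : Finset ι, A.card ≤ 1 → sDiv μ f A = 0) ∧
    (∀ A B C : Finset ι, B.Nonempty →
      sDiv μ f (A ∪ C) ≤ sDiv μ f (A ∪ B) + sDiv μ f (B ∪ C)) := by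
  refine ⟨fun A => ENNReal.toReal_nonneg, ?_, ?_⟩
  · intro A hA
    have : {ω | ¬ ∀ i ∈ A, ∀ j ∈ A, f i ω = f j ω} = ∅ := by
      ext ω
      simp only [Set.mem_setOf_eq, Set.mem_empty_iff_false, iff_false, not_not]
      intro i hi j hj
      have := Finset.card_le_one.mp hA i hi j hj
      rw [this]
    simp only [sDiv]
    rw [this, measure_empty, ENNReal.toReal_zero]
  · intro A B C hB
    obtain ⟨b, hb⟩ := hB
    have hsub : {ω | ¬ ∀ i ∈ A ∪ C, ∀ j ∈ A ∪ C, f i ω = f j ω} ⊆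
        {ω | ¬ ∀ i ∈ A ∪ B, ∀ j ∈ A ∪ B, f i ω = f j ω} ∪
        {ω | ¬ ∀ i ∈ B ∪ C, ∀ j ∈ B ∪ C, f i ω = f j ω} := by
      intro ω hω
      by_contra h
      rw [Set.mem_union] at h
      push_neg at h
      simp only [Set.mem_setOf_eq, not_not] at h
      obtain ⟨h1, h2⟩ := h
      push_neg at h1 h2
      apply hω
      intro i hi j hj
      have key : ∀ k ∈ A ∪ C, f k ω = f b ω := by
        intro k hk
        rcases Finset.mem_union.mp hk with hk | hk
        · exact h1 k (Finset.mem_union_left _ hk) b (Finset.mem_union_right _ hb)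
        · exact h2 k (Finset.mem_union_right _ hk) b (Finset.mem_union_left _ hb)
      rw [key i hi, key j hj]
    have hle : μ {ω | ¬ ∀ i ∈ A ∪ C, ∀ j ∈ A ∪ C, f i ω = f j ω} ≤
        μ {ω | ¬ ∀ i ∈ A ∪ B, ∀ j ∈ A ∪ B, f i ω = f j ω} +
        μ {ω | ¬ ∀ i ∈ B ∪ C, ∀ j ∈ B ∪ C, f i ω = f j ω} :=
      le_trans (measure_mono hsub) (measure_union_le _ _)
    have hfin : ∀ (s : Set Ω), μ s ≠ ⊤ := fun s => measure_ne_top μ s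
    unfold sDiv
    rw [← ENNReal.toReal_add (hfin _) (hfin _)]
    exact ENNReal.toReal_mono (ENNReal.add_ne_top.mpr ⟨hfin _, hfin _⟩) hle
end

section
/- Let (M, Σ, μ) be a measure space and let X be the collection of sets in Σ of finite measure. For a finite collection {E₁, …, E_k} ⊆ X define δ({E₁,…,E_k}) = μ(⋃ᵢ Eᵢ \ ⋂ᵢ Eᵢ) (and δ(∅) = 0). Then (X, δ) is a diversity (allowing δ(A) = 0 for |A| > 1). -/
open MeasureTheory

/-- The measure diversity: for a finite collection of finite-measure sets,
`δ({E₁,…,E_k}) = μ(⋃ᵢ Eᵢ \ ⋂ᵢ Eᵢ)` (and `δ(∅) = 0`). -/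
noncomputable def measureDiv {M : Type*} [MeasurableSpace M] (μ : Measure M)
    (A : Finset {E : Set M // MeasurableSet E ∧ μ E < ⊤}) : ℝ :=
  (μ ((⋃ E ∈ A, (E : Set M)) \ ⋂ E ∈ A, (E : Set M))).toReal

private lemma measureDiv_fin {M : Type*} [MeasurableSpace M] (μ : Measure M)
    (A : Finset {E : Set M // MeasurableSet E ∧ μ E < ⊤}) :
    μ ((⋃ E ∈ A, (E : Set M)) \ ⋂ E ∈ A, (E : Set M)) < ⊤ := by
  calc μ ((⋃ E ∈ A, (E : Set M)) \ ⋂ E ∈ A, (E : Set M))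
      ≤ μ (⋃ E ∈ A, (E : Set M)) := measure_mono Set.diff_subset
    _ ≤ ∑ E ∈ A, μ (E : Set M) := measure_biUnion_finset_le A _
    _ < ⊤ := ENNReal.sum_lt_top.2 fun E _ => E.2.2

/-- the measure diversity is a diversity (with the relaxed
condition D1) on the collection of finite-measure sets. -/
theorem measureDiv_is_diversity {M : Type*} [MeasurableSpace M] (μ : Measure M)
    [DecidableEq {E : Set M // MeasurableSet E ∧ μ E < ⊤}] :
    (∀ A, 0 ≤ measureDiv μ A) ∧
    (∀ A, A.card ≤ 1 → measureDiv μ A = 0) ∧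
    (∀ A B C, B.Nonempty →
      measureDiv μ (A ∪ C) ≤ measureDiv μ (A ∪ B) + measureDiv μ (B ∪ C)) := by
  refine ⟨fun A => ENNReal.toReal_nonneg, ?_, ?_⟩
  · intro A hA
    interval_cases h : A.card
    · rw [Finset.card_eq_zero] at h
      subst h
      simp [measureDiv]
    · rw [Finset.card_eq_one] at h
      obtain ⟨E, rfl⟩ := h
      simp [measureDiv]
  · intro A B C ⟨b, hb⟩
    have key : (⋃ E ∈ A ∪ C, (E : Set M)) \ ⋂ E ∈ A ∪ C, (E : Set M) ⊆
        ((⋃ E ∈ A ∪ B, (E : Set M)) \ ⋂ E ∈ A ∪ B, (E : Set M)) ∪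
        ((⋃ E ∈ B ∪ C, (E : Set M)) \ ⋂ E ∈ B ∪ C, (E : Set M)) := by
      rintro x ⟨hxU, hxI⟩
      simp only [Set.mem_iUnion, Set.mem_iInter, Finset.mem_union, exists_prop,
        not_forall, Set.mem_union, Set.mem_diff] at *
      obtain ⟨E, hE, hxE⟩ := hxU
      obtain ⟨F, hF, hxF⟩ := hxI
      rcases hE with hE | hE
      · -- E ∈ A : x ∈ ⋃ (A ∪ B)
        by_cases hI : ∀ G, (G ∈ A ∨ G ∈ B) → x ∈ (G : Set M)
        · -- x ∈ all of A ∪ B, in particular x ∈ b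
          right
          refine ⟨⟨b, Or.inl hb, hI b (Or.inr hb)⟩, F, ?_, hxF⟩
          rcases hF with hF | hF
          · exact absurd (hI F (Or.inl hF)) hxF
          · exact Or.inr hF
        · push_neg at hI
          obtain ⟨G, hG, hxG⟩ := hI
          exact Or.inl ⟨⟨E, Or.inl hE, hxE⟩, G, hG, hxG⟩
      · -- E ∈ C : x ∈ ⋃ (B ∪ C)
        by_cases hI : ∀ G, (G ∈ B ∨ G ∈ C) → x ∈ (G : Set M)
        · left
          refine ⟨⟨b, Or.inr hb, hI b (Or.inl hb)⟩, F, ?_, hxF⟩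
          rcases hF with hF | hF
          · exact Or.inl hF
          · exact absurd (hI F (Or.inr hF)) hxF
        · push_neg at hI
          obtain ⟨G, hG, hxG⟩ := hI
          exact Or.inr ⟨⟨E, Or.inr hE, hxE⟩, G, hG, hxG⟩
    have hle := ((measure_mono (μ := μ) key).trans (measure_union_le _ _))
    unfold measureDiv
    rw [← ENNReal.toReal_add (measureDiv_fin μ (A ∪ B)).ne (measureDiv_fin μ (B ∪ C)).ne]
    exact ENNReal.toReal_mono
      (ENNReal.add_ne_top.2 ⟨(measureDiv_fin μ (A ∪ B)).ne, (measureDiv_fin μ (B ∪ C)).ne⟩) hle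
end

section
/- Let H = (V, E) be a hypergraph with non-negative edge weights w : E → ℝ≥0 such that every subset of V is covered by some connected set of edges. The hypergraph Steiner diversity δ_H — where δ_H(A) is the minimum total weight of a subset E' ⊆ E whose induced sub-hypergraph is connected and covers A — is the unique maximal diversity δ (under pointwise ordering) satisfying δ(A) ≤ w(A) for all A ∈ E; i.e., δ_H(A) ≤ w(A) for all A ∈ E, and any diversity δ with δ(A) ≤ w(A) for all A ∈ E satisfies δ(B) ≤ δ_H(B) for all finite B ⊆ V. -/
open Finset

structure Diversity (X : Type*) [DecidableEq X] where
  δ : Finset X → ℝ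
  nonneg : ∀ A : Finset X, 0 ≤ δ A
  eq_zero_of_card_le_one : ∀ A : Finset X, A.card ≤ 1 → δ A = 0
  triangle : ∀ A B C : Finset X, B.Nonempty → δ (A ∪ C) ≤ δ (A ∪ B) + δ (B ∪ C)

/-- The set of vertices covered by a collection of hyperedges. -/
def edgeUnion {V : Type*} [DecidableEq V] (E' : Finset (Finset V)) : Finset V :=
  E'.biUnion id

/-- A collection of hyperedges is connected if its vertex union cannot be split
into two nonempty parts with no hyperedge meeting both. -/
def HConnected {V : Type*} [DecidableEq V] (E' : Finset (Finset V)) : Prop :=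
  ∀ S : Finset V, (S ∩ edgeUnion E').Nonempty → (edgeUnion E' \ S).Nonempty →
    ∃ e ∈ E', (e ∩ S).Nonempty ∧ (e \ S).Nonempty

/-- The hypergraph Steiner diversity: the minimum total weight of a connected
sub-collection of hyperedges covering `A`. -/
noncomputable def steinerHDiv {V : Type*} [DecidableEq V] (E : Finset (Finset V))
    (w : Finset V → ℝ) (A : Finset V) : ℝ :=
  sInf {x : ℝ | ∃ E' ⊆ E, HConnected E' ∧ A ⊆ edgeUnion E' ∧ x = ∑ e ∈ E', w e}

lemma div_insert {X : Type*} [DecidableEq X] (D : Diversity X) (a : X) (A : Finset X) :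
    D.δ A ≤ D.δ (insert a A) := by
  have h := D.triangle ∅ {a} A (singleton_nonempty a)
  have h0 : D.δ ({a} : Finset X) = 0 := D.eq_zero_of_card_le_one _ (by simp)
  simp only [Finset.empty_union, h0, zero_add] at h
  rw [Finset.insert_eq]
  exact h

lemma div_union_right {X : Type*} [DecidableEq X] (D : Diversity X) (A s : Finset X) :
    D.δ A ≤ D.δ (A ∪ s) := by
  induction s using Finset.induction_on with
  | empty => simp
  | @insert a t ha ih =>
      calc D.δ A ≤ D.δ (A ∪ t) := ih
        _ ≤ D.δ (insert a (A ∪ t)) := div_insert D a _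
        _ = D.δ (A ∪ insert a t) := by rw [Finset.union_insert]

lemma div_mono {X : Type*} [DecidableEq X] (D : Diversity X) {A B : Finset X}
    (h : A ⊆ B) : D.δ A ≤ D.δ B := by
  have := div_union_right D A B
  rwa [Finset.union_eq_right.mpr h] at this

lemma edgeUnion_mono {V : Type*} [DecidableEq V] {F E' : Finset (Finset V)}
    (h : F ⊆ E') : edgeUnion F ⊆ edgeUnion E' :=
  Finset.biUnion_subset_biUnion_of_subset_left _ h

lemma div_grow {V : Type*} [DecidableEq V] (D : Diversity V) (E' : Finset (Finset V))
    (hc : HConnected E') :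
    ∀ n : ℕ, ∀ F : Finset (Finset V), F ⊆ E' → (edgeUnion F).Nonempty →
      (edgeUnion E' \ edgeUnion F).card ≤ n →
      D.δ (edgeUnion F) ≤ ∑ e ∈ F, D.δ e →
      D.δ (edgeUnion E') ≤ ∑ e ∈ E', D.δ e := by
  intro n
  induction n with
  | zero =>
      intro F hFE hne hcard hF
      have hsub : edgeUnion E' ⊆ edgeUnion F := by
        intro v hv
        by_contra hvF
        have : v ∈ edgeUnion E' \ edgeUnion F := Finset.mem_sdiff.mpr ⟨hv, hvF⟩
        have := Finset.card_pos.mpr ⟨v, this⟩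
        omega
      have heq : edgeUnion F = edgeUnion E' :=
        Finset.Subset.antisymm (edgeUnion_mono hFE) hsub
      calc D.δ (edgeUnion E') = D.δ (edgeUnion F) := by rw [heq]
        _ ≤ ∑ e ∈ F, D.δ e := hF
        _ ≤ ∑ e ∈ E', D.δ e :=
            Finset.sum_le_sum_of_subset_of_nonneg hFE (fun e _ _ => D.nonneg e)
  | succ n ih =>
      intro F hFE hne hcard hF
      by_cases hdiff : edgeUnion E' \ edgeUnion F = ∅
      · have hsub : edgeUnion E' ⊆ edgeUnion F := by
          intro v hv
          by_contra hvF
          have : v ∈ edgeUnion E' \ edgeUnion F := Finset.mem_sdiff.mpr ⟨hv, hvF⟩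
          simp [hdiff] at this
        have heq : edgeUnion F = edgeUnion E' :=
          Finset.Subset.antisymm (edgeUnion_mono hFE) hsub
        calc D.δ (edgeUnion E') = D.δ (edgeUnion F) := by rw [heq]
          _ ≤ ∑ e ∈ F, D.δ e := hF
          _ ≤ ∑ e ∈ E', D.δ e :=
              Finset.sum_le_sum_of_subset_of_nonneg hFE (fun e _ _ => D.nonneg e)
      · have hS : (edgeUnion F ∩ edgeUnion E').Nonempty := by
          obtain ⟨v, hv⟩ := hne
          exact ⟨v, Finset.mem_inter.mpr ⟨hv, edgeUnion_mono hFE hv⟩⟩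
        have hT : (edgeUnion E' \ edgeUnion F).Nonempty :=
          Finset.nonempty_of_ne_empty hdiff
        obtain ⟨e, heE, ⟨x, hx⟩, ⟨y, hy⟩⟩ := hc (edgeUnion F) hS hT
        rw [Finset.mem_inter] at hx
        rw [Finset.mem_sdiff] at hy
        have heF : e ∉ F := by
          intro heF
          exact hy.2 (Finset.mem_biUnion.mpr ⟨e, heF, hy.1⟩)
        set F' : Finset (Finset V) := insert e F with hF'
        have hF'E : F' ⊆ E' := Finset.insert_subset heE hFE
        have hUF' : edgeUnion F' = edgeUnion F ∪ e := by
          simp [edgeUnion, hF', Finset.biUnion_insert, Finset.union_comm]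
        have hdelta : D.δ (edgeUnion F') ≤ ∑ f ∈ F', D.δ f := by
          have ht := D.triangle (edgeUnion F) {x} e (singleton_nonempty x)
          have h1 : edgeUnion F ∪ {x} = edgeUnion F := by
            rw [Finset.union_eq_left]; simp [hx.2]
          have h2 : ({x} : Finset V) ∪ e = e := by
            rw [Finset.union_eq_right]; simp [hx.1]
          rw [h1, h2] at ht
          rw [hUF', Finset.sum_insert heF]
          calc D.δ (edgeUnion F ∪ e) ≤ D.δ (edgeUnion F) + D.δ e := ht
            _ ≤ (∑ f ∈ F, D.δ f) + D.δ e := by linarith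
            _ = D.δ e + ∑ f ∈ F, D.δ f := by ring
        have hcard' : (edgeUnion E' \ edgeUnion F').card ≤ n := by
          have hysub : edgeUnion E' \ edgeUnion F' ⊆
              (edgeUnion E' \ edgeUnion F).erase y := by
            intro v hv
            rw [Finset.mem_sdiff] at hv
            have hvF : v ∉ edgeUnion F := fun h =>
              hv.2 (by rw [hUF']; exact Finset.mem_union_left _ h)
            have hvy : v ≠ y := by
              intro h; subst h
              exact hv.2 (by rw [hUF']; exact Finset.mem_union_right _ hy.1)
            exact Finset.mem_erase.mpr ⟨hvy, Finset.mem_sdiff.mpr ⟨hv.1, hvF⟩⟩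
          have hymem : y ∈ edgeUnion E' \ edgeUnion F :=
            Finset.mem_sdiff.mpr ⟨edgeUnion_mono (Finset.singleton_subset_iff.mpr heE)
              (Finset.mem_biUnion.mpr ⟨e, Finset.mem_singleton_self e, hy.1⟩), hy.2⟩
          have := Finset.card_le_card hysub
          rw [Finset.card_erase_of_mem hymem] at this
          omega
        have hne' : (edgeUnion F').Nonempty := by
          obtain ⟨v, hv⟩ := hne
          exact ⟨v, by rw [hUF']; exact Finset.mem_union_left _ hv⟩
        exact ih F' hF'E hne' hcard' hdelta

lemma div_le_sum {V : Type*} [DecidableEq V] (D : Diversity V) (E' : Finset (Finset V))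
    (hc : HConnected E') : D.δ (edgeUnion E') ≤ ∑ e ∈ E', D.δ e := by
  by_cases hU : (edgeUnion E').Nonempty
  · obtain ⟨v, hv⟩ := hU
    obtain ⟨e, heE, hve⟩ := Finset.mem_biUnion.mp hv
    have hne : (edgeUnion ({e} : Finset (Finset V))).Nonempty := by
      exact ⟨v, Finset.mem_biUnion.mpr ⟨e, Finset.mem_singleton_self e, hve⟩⟩
    have hsingle : D.δ (edgeUnion ({e} : Finset (Finset V))) ≤
        ∑ f ∈ ({e} : Finset (Finset V)), D.δ f := by
      simp [edgeUnion]
    exact div_grow D E' hc _ {e} (Finset.singleton_subset_iff.mpr heE) hne le_rfl hsingle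
  · rw [Finset.not_nonempty_iff_eq_empty] at hU
    rw [hU, D.eq_zero_of_card_le_one ∅ (by simp)]
    exact Finset.sum_nonneg (fun e _ => D.nonneg e)

/-- the hypergraph Steiner diversity is the unique maximal diversity
`δ` with `δ(A) ≤ w(A)` for all hyperedges `A`: it satisfies this bound, and it
dominates every diversity satisfying the bound. -/
theorem steinerHDiv_maximal {V : Type*} [DecidableEq V] (E : Finset (Finset V))
    (w : Finset V → ℝ) (hw : ∀ e ∈ E, 0 ≤ w e)
    (hcov : ∀ A : Finset V, ∃ E' ⊆ E, HConnected E' ∧ A ⊆ edgeUnion E') :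
    (∀ A ∈ E, steinerHDiv E w A ≤ w A) ∧
    (∀ D : Diversity V, (∀ A ∈ E, D.δ A ≤ w A) →
      ∀ B : Finset V, D.δ B ≤ steinerHDiv E w B) := by
  have hbdd : ∀ A : Finset V, BddBelow
      {x : ℝ | ∃ E' ⊆ E, HConnected E' ∧ A ⊆ edgeUnion E' ∧ x = ∑ e ∈ E', w e} := by
    intro A
    refine ⟨0, fun x hx => ?_⟩
    obtain ⟨E', hE'E, _, _, hx⟩ := hx
    rw [hx]
    exact Finset.sum_nonneg (fun e he => hw e (hE'E he))
  constructor
  · intro A hA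
    have hmem : w A ∈
        {x : ℝ | ∃ E' ⊆ E, HConnected E' ∧ A ⊆ edgeUnion E' ∧ x = ∑ e ∈ E', w e} := by
      refine ⟨{A}, Finset.singleton_subset_iff.mpr hA, ?_, ?_, ?_⟩
      · intro S hS1 hS2
        refine ⟨A, Finset.mem_singleton_self A, ?_, ?_⟩
        · obtain ⟨v, hv⟩ := hS1
          rw [Finset.mem_inter] at hv
          exact ⟨v, Finset.mem_inter.mpr ⟨by simpa [edgeUnion] using hv.2, hv.1⟩⟩
        · obtain ⟨v, hv⟩ := hS2
          rw [Finset.mem_sdiff] at hv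
          exact ⟨v, Finset.mem_sdiff.mpr ⟨by simpa [edgeUnion] using hv.1, hv.2⟩⟩
      · intro v hv
        simp [edgeUnion, hv]
      · simp
    exact csInf_le (hbdd A) hmem
  · intro D hD B
    apply le_csInf
    · obtain ⟨E', hE'E, hc, hcov'⟩ := hcov B
      exact ⟨∑ e ∈ E', w e, E', hE'E, hc, hcov', rfl⟩
    · rintro x ⟨E', hE'E, hc, hBsub, rfl⟩
      calc D.δ B ≤ D.δ (edgeUnion E') := div_mono D hBsub
        _ ≤ ∑ e ∈ E', D.δ e := div_le_sum D E' hc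
        _ ≤ ∑ e ∈ E', w e := Finset.sum_le_sum (fun e he => hD e (hE'E he))
end

section
/- Let (X, δ) be a diversity with induced metric d(a,b) = δ({a,b}), let δ_diam be the diameter diversity of d and δ_S the Steiner diversity of d. Then for all finite A ⊆ X: δ_diam(A) ≤ δ(A) ≤ δ_S(A) ≤ (|A| − 1)·δ_diam(A) (the last inequality when A is nonempty). -/
open Finset

lemma Diversity.le_insert {X : Type*} [DecidableEq X] (D : Diversity X) (A : Finset X) (x : X) :
    D.δ A ≤ D.δ (insert x A) := by
  have h := D.triangle A {x} ∅ (by simp)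
  have hx : D.δ {x} = 0 := D.eq_zero_of_card_le_one _ (by simp)
  have e : A ∪ {x} = insert x A := by
    ext y; simp [or_comm]
  rw [← e]
  simpa [hx] using h

lemma Diversity.mono {X : Type*} [DecidableEq X] (D : Diversity X) {B A : Finset X}
    (h : B ⊆ A) : D.δ B ≤ D.δ A := by
  have key : ∀ C : Finset X, D.δ B ≤ D.δ (B ∪ C) := by
    intro C
    induction C using Finset.induction with
    | empty => simp
    | insert _ _ hx ih =>
      rw [Finset.union_insert]
      exact ih.trans (D.le_insert _ _)
  have := key A
  rwa [Finset.union_eq_right.mpr h] at this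

lemma Diversity.star_bound {X : Type*} [DecidableEq X] (D : Diversity X) :
    ∀ (A : Finset X) (a₀ : X), a₀ ∈ A → D.δ A ≤ ∑ a ∈ A.erase a₀, D.δ {a₀, a} := by
  intro A
  induction A using Finset.strongInduction with
  | _ A ih =>
    intro a₀ ha₀
    by_cases h : A.erase a₀ = ∅
    · have hA : A = {a₀} := by
        apply Finset.eq_singleton_iff_unique_mem.mpr
        refine ⟨ha₀, fun x hx => ?_⟩
        by_contra hne
        exact absurd (Finset.mem_erase.mpr ⟨hne, hx⟩) (by simp [h])
      rw [h, hA]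
      simp only [Finset.sum_empty]
      exact le_of_eq (D.eq_zero_of_card_le_one {a₀} (by simp))
    · obtain ⟨a, ha⟩ := Finset.nonempty_iff_ne_empty.mpr h
      have haA : a ∈ A := Finset.mem_of_mem_erase ha
      have hne : a ≠ a₀ := Finset.ne_of_mem_erase ha
      have key : D.δ A ≤ D.δ (A.erase a) + D.δ {a₀, a} := by
        have h3 := D.triangle (A.erase a) {a₀} {a} (by simp)
        have e1 : A.erase a ∪ {a} = A := by
          ext y
          by_cases hy : y = a <;> simp [hy, haA, Finset.mem_erase]
        have e2 : A.erase a ∪ {a₀} = A.erase a := by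
          ext y
          by_cases hy : y = a₀ <;>
            simp [hy, ha₀, Finset.mem_erase, hne.symm, Ne.symm hne]
        rw [e1, e2] at h3
        simpa using h3
      have ih' := ih (A.erase a) (Finset.erase_ssubset haA) a₀
        (Finset.mem_erase.mpr ⟨hne.symm, ha₀⟩)
      have hsum : ∑ b ∈ A.erase a₀, D.δ {a₀, b}
          = D.δ {a₀, a} + ∑ b ∈ (A.erase a).erase a₀, D.δ {a₀, b} := by
        rw [Finset.erase_right_comm]
        exact (Finset.add_sum_erase _ _ (Finset.mem_erase.mpr ⟨hne, haA⟩)).symm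
      rw [hsum]
      linarith

/-- The diameter diversity of the metric induced by a diversity:
`δ_diam(A) = max_{a,b∈A} δ({a,b})`. -/
noncomputable def diamDiv {X : Type*} [DecidableEq X] (D : Diversity X)
    (A : Finset X) : ℝ :=
  if h : A.Nonempty then (A ×ˢ A).sup' (h.product h) (fun p => D.δ {p.1, p.2}) else 0

/-- The Steiner diversity of the induced metric, characterized as the maximal
diversity dominated on pairs by the induced metric. -/
noncomputable def steinerDiv {X : Type*} [DecidableEq X] (D : Diversity X)
    (A : Finset X) : ℝ :=
  sSup {x : ℝ | ∃ D' : Diversity X, (∀ a b : X, D'.δ {a, b} ≤ D.δ {a, b}) ∧ x = D'.δ A}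

lemma pair_le_diamDiv {X : Type*} [DecidableEq X] (D : Diversity X) {A : Finset X}
    {a b : X} (ha : a ∈ A) (hb : b ∈ A) : D.δ {a, b} ≤ diamDiv D A := by
  have hA : A.Nonempty := ⟨a, ha⟩
  rw [diamDiv, dif_pos hA]
  have hm : (a, b) ∈ A ×ˢ A := Finset.mem_product.mpr ⟨ha, hb⟩
  exact Finset.le_sup' (fun p : X × X => D.δ {p.1, p.2}) hm

lemma diamDiv_nonneg {X : Type*} [DecidableEq X] (D : Diversity X) (A : Finset X) :
    0 ≤ diamDiv D A := by
  rcases A.eq_empty_or_nonempty with h | ⟨a, ha⟩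
  · simp [diamDiv, h]
  · exact le_trans (D.nonneg _) (pair_le_diamDiv D ha ha)

lemma mem_bound {X : Type*} [DecidableEq X] (D : Diversity X) (A : Finset X)
    (hA : A.Nonempty) {x : ℝ}
    (hx : x ∈ {x : ℝ | ∃ D' : Diversity X, (∀ a b : X, D'.δ {a, b} ≤ D.δ {a, b}) ∧ x = D'.δ A}) :
    x ≤ ((A.card : ℝ) - 1) * diamDiv D A := by
  obtain ⟨D', hle, rfl⟩ := hx
  obtain ⟨a₀, ha₀⟩ := hA
  calc D'.δ A ≤ ∑ a ∈ A.erase a₀, D'.δ {a₀, a} := D'.star_bound A a₀ ha₀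
    _ ≤ ∑ a ∈ A.erase a₀, diamDiv D A := by
        refine Finset.sum_le_sum fun a haa => ?_
        exact (hle a₀ a).trans (pair_le_diamDiv D ha₀ (Finset.mem_of_mem_erase haa))
    _ = ((A.card : ℝ) - 1) * diamDiv D A := by
        rw [Finset.sum_const, Finset.card_erase_of_mem ha₀, nsmul_eq_mul]
        congr 1
        have : 1 ≤ A.card := Finset.card_pos.mpr ⟨a₀, ha₀⟩
        push_cast [Nat.cast_sub this]
        ring

/-- `δ_diam(A) ≤ δ(A) ≤ δ_S(A) ≤ (|A| − 1)·δ_diam(A)`. -/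
theorem diversity_between_diam_and_steiner {X : Type*} [DecidableEq X]
    (D : Diversity X) (A : Finset X) :
    diamDiv D A ≤ D.δ A ∧ D.δ A ≤ steinerDiv D A ∧
    (A.Nonempty → steinerDiv D A ≤ ((A.card : ℝ) - 1) * diamDiv D A) := by
  set S := {x : ℝ | ∃ D' : Diversity X, (∀ a b : X, D'.δ {a, b} ≤ D.δ {a, b}) ∧ x = D'.δ A}
  have hDS : D.δ A ∈ S := ⟨D, fun a b => le_refl _, rfl⟩
  have hbdd : BddAbove S := by
    rcases A.eq_empty_or_nonempty with h | hA
    · refine ⟨0, fun x hx => ?_⟩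
      obtain ⟨D', _, rfl⟩ := hx
      exact le_of_eq (D'.eq_zero_of_card_le_one A (by simp [h]))
    · exact ⟨_, fun x hx => mem_bound D A hA hx⟩
  refine ⟨?_, le_csSup hbdd hDS, fun hA => ?_⟩
  · rcases A.eq_empty_or_nonempty with h | hA
    · simpa [diamDiv, h] using D.nonneg A
    · rw [diamDiv, dif_pos hA]
      refine Finset.sup'_le _ _ fun p hp => ?_
      obtain ⟨h1, h2⟩ := Finset.mem_product.mp hp
      exact D.mono (by intro x hx; simp at hx; rcases hx with rfl | rfl <;> assumption)
  · refine Real.sSup_le (fun x hx => mem_bound D A hA hx) ?_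
    have h1 : 1 ≤ A.card := Finset.card_pos.mpr hA
    have : (0:ℝ) ≤ (A.card : ℝ) - 1 := by
      have : (1:ℝ) ≤ (A.card : ℝ) := by exact_mod_cast h1
      linarith
    exact mul_nonneg this (diamDiv_nonneg D A)
end

section
/- If (X, δ) is an L₁-embeddable diversity with induced metric d(a,b) = δ({a,b}), then for every finite A = {a₁, …, a_k} ⊆ X, (k − 1)·δ(A) ≤ Σ_{1 ≤ i < j ≤ k} d(aᵢ, aⱼ). -/
open Finset MeasureTheory

noncomputable def pairSup {X Ω : Type*} (φ : X → Ω → ℝ) (A : Finset X) (ω : Ω) : ℝ :=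
  if h : A.Nonempty then (A ×ˢ A).sup' (h.product h) (fun p => |φ p.1 ω - φ p.2 ω|) else 0

def IsL1Embeddable {X : Type*} [DecidableEq X] (D : Diversity X) : Prop :=
  ∃ (Ω : Type) (_ : MeasurableSpace Ω) (μ : Measure Ω) (φ : X → Ω → ℝ),
    (∀ x : X, Integrable (φ x) μ) ∧
    ∀ A : Finset X, D.δ A = ∫ ω, pairSup φ A ω ∂μ

lemma pairSup_nonneg {X Ω : Type*} (φ : X → Ω → ℝ) (A : Finset X) (ω : Ω) :
    0 ≤ pairSup φ A ω := by
  unfold pairSup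
  split
  · next h =>
    obtain ⟨a, ha⟩ := h
    exact (abs_nonneg _).trans
      (Finset.le_sup' (fun p => |φ p.1 ω - φ p.2 ω|)
        (show (a, a) ∈ A ×ˢ A from Finset.mem_product.2 ⟨ha, ha⟩))
  · exact le_refl 0

lemma pairSup_pair {X Ω : Type*} [DecidableEq X] (φ : X → Ω → ℝ) (a b : X) (ω : Ω) :
    pairSup φ {a, b} ω = |φ a ω - φ b ω| := by
  have h : ({a, b} : Finset X).Nonempty := ⟨a, by simp⟩
  rw [pairSup, dif_pos h]
  apply le_antisymm
  · apply Finset.sup'_le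
    rintro ⟨u, v⟩ huv
    rw [Finset.mem_product] at huv
    obtain ⟨hu, hv⟩ := huv
    simp only [Finset.mem_insert, Finset.mem_singleton] at hu hv
    rcases hu with rfl | rfl <;> rcases hv with rfl | rfl
    · simpa using abs_nonneg _
    · exact le_refl _
    · exact (abs_sub_comm _ _).le
    · simpa using abs_nonneg _
  · exact Finset.le_sup' (fun p => |φ p.1 ω - φ p.2 ω|)
      (show (a, b) ∈ ({a, b} : Finset X) ×ˢ ({a, b} : Finset X) from
        Finset.mem_product.2 ⟨Finset.mem_insert_self a {b},
          Finset.mem_insert_of_mem (Finset.mem_singleton_self b)⟩)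

lemma key_pointwise {X Ω : Type*} [DecidableEq X] (φ : X → Ω → ℝ) (A : Finset X) (ω : Ω) :
    ((A.card : ℝ) - 1) * pairSup φ A ω ≤
      (1 / 2) * ∑ a ∈ A, ∑ b ∈ A, |φ a ω - φ b ω| := by
  rcases A.eq_empty_or_nonempty with rfl | hA
  · simp [pairSup]
  set x : X → ℝ := fun a => φ a ω with hx
  have hRHS : 0 ≤ ∑ a ∈ A, ∑ b ∈ A, |x a - x b| :=
    Finset.sum_nonneg fun a _ => Finset.sum_nonneg fun b _ => abs_nonneg _
  rw [pairSup, dif_pos hA]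
  set s := (A ×ˢ A).sup' (hA.product hA) (fun p => |x p.1 - x p.2|) with hsdef
  obtain ⟨⟨p, q⟩, hpq, hs⟩ :=
    Finset.exists_mem_eq_sup' (hA.product hA) (fun p => |x p.1 - x p.2|)
  rw [Finset.mem_product] at hpq
  obtain ⟨hp, hq⟩ := hpq
  have hs' : s = |x p - x q| := hs
  have hs0 : 0 ≤ s := hs' ▸ abs_nonneg _
  rcases eq_or_lt_of_le hs0 with h0 | hspos
  · -- s = 0
    rw [← h0, mul_zero]
    positivity
  have hne : p ≠ q := by
    rintro rfl
    simp [hs'] at hspos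
  set B := A \ {p, q} with hB
  have hA2 : A = insert p (insert q B) := by
    ext a
    simp only [Finset.mem_insert, hB, Finset.mem_sdiff, Finset.mem_singleton]
    constructor
    · intro h
      by_cases h1 : a = p
      · tauto
      by_cases h2 : a = q
      · tauto
      · tauto
    · rintro (rfl | rfl | ⟨h, _⟩) <;> assumption
  have hpB : p ∉ insert q B := by simp [hB, hne]
  have hqB : q ∉ B := by simp [hB]
  have hcard : (A.card : ℝ) = (B.card : ℝ) + 2 := by
    rw [hA2, Finset.card_insert_of_notMem hpB, Finset.card_insert_of_notMem hqB]
    push_cast; ring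
  have inner : ∀ a, ∑ b ∈ A, |x a - x b| =
      |x a - x p| + |x a - x q| + ∑ b ∈ B, |x a - x b| := by
    intro a
    rw [hA2, Finset.sum_insert hpB, Finset.sum_insert hqB]; ring
  have hT : ∑ a ∈ A, ∑ b ∈ A, |x a - x b| =
      (|x p - x p| + |x p - x q| + ∑ b ∈ B, |x p - x b|)
      + (|x q - x p| + |x q - x q| + ∑ b ∈ B, |x q - x b|)
      + ∑ a ∈ B, (|x a - x p| + |x a - x q| + ∑ b ∈ B, |x a - x b|) := by
    simp_rw [inner]
    rw [hA2, Finset.sum_insert hpB, Finset.sum_insert hqB]; ring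
  have h1 : ∑ b ∈ B, |x p - x b| + ∑ b ∈ B, |x q - x b| ≥ (B.card : ℝ) * s := by
    rw [← Finset.sum_add_distrib]
    calc (B.card : ℝ) * s = ∑ _b ∈ B, s := by rw [Finset.sum_const, nsmul_eq_mul]
    _ ≤ ∑ b ∈ B, (|x p - x b| + |x q - x b|) := by
        apply Finset.sum_le_sum
        intro b _
        rw [hs']
        calc |x p - x q| ≤ |x p - x b| + |x b - x q| := abs_sub_le _ _ _
        _ = |x p - x b| + |x q - x b| := by rw [abs_sub_comm (x b)]
  have h2 : ∑ a ∈ B, (|x a - x p| + |x a - x q| + ∑ b ∈ B, |x a - x b|) ≥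
      (B.card : ℝ) * s := by
    calc (B.card : ℝ) * s = ∑ _a ∈ B, s := by rw [Finset.sum_const, nsmul_eq_mul]
    _ ≤ _ := by
        apply Finset.sum_le_sum
        intro a _
        have h3 : |x p - x q| ≤ |x a - x p| + |x a - x q| := by
          calc |x p - x q| ≤ |x p - x a| + |x a - x q| := abs_sub_le _ _ _
          _ = |x a - x p| + |x a - x q| := by rw [abs_sub_comm (x p)]
        have h4 : (0:ℝ) ≤ ∑ b ∈ B, |x a - x b| :=
          Finset.sum_nonneg fun b _ => abs_nonneg _
        rw [hs']
        linarith
  have hqp : |x q - x p| = s := by rw [hs', abs_sub_comm]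
  have hpp : |x p - x p| = 0 := by simp
  have hqq : |x q - x q| = 0 := by simp
  rw [hT, hcard, hpp, hqq, hqp, ← hs']
  linarith

/-- for an L₁-embeddable diversity with induced metric
`d(a,b) = δ({a,b})`, we have `(|A| − 1)·δ(A) ≤ ∑_{i<j} d(aᵢ,aⱼ)`
(the right-hand side being half the full double sum). -/
theorem l1_induced_metric_bound {X : Type*} [DecidableEq X] (D : Diversity X)
    (hD : IsL1Embeddable D) (A : Finset X) :
    ((A.card : ℝ) - 1) * D.δ A ≤ (1 / 2) * ∑ a ∈ A, ∑ b ∈ A, D.δ {a, b} := by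
  have hRHS : 0 ≤ (1 / 2 : ℝ) * ∑ a ∈ A, ∑ b ∈ A, D.δ {a, b} := by
    apply mul_nonneg (by norm_num)
    exact Finset.sum_nonneg fun a _ => Finset.sum_nonneg fun b _ => D.nonneg _
  by_cases hA : A.card ≤ 1
  · rw [D.eq_zero_of_card_le_one A hA, mul_zero]
    exact hRHS
  push_neg at hA
  have hk : (1 : ℝ) ≤ (A.card : ℝ) := by
    have : 1 ≤ A.card := by omega
    exact_mod_cast this
  obtain ⟨Ω, mΩ, μ, φ, hint, hδ⟩ := hD
  have habs : ∀ a b : X, Integrable (fun ω => |φ a ω - φ b ω|) μ :=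
    fun a b => ((hint a).sub (hint b)).abs
  have hpair : ∀ a b : X, D.δ {a, b} = ∫ ω, |φ a ω - φ b ω| ∂μ := by
    intro a b
    rw [hδ]
    exact integral_congr_ae (Filter.Eventually.of_forall fun ω => pairSup_pair φ a b ω)
  have hFint : Integrable (fun ω => ∑ a ∈ A, ∑ b ∈ A, |φ a ω - φ b ω|) μ :=
    integrable_finset_sum _ fun a _ => integrable_finset_sum _ fun b _ => habs a b
  have hsum : ∑ a ∈ A, ∑ b ∈ A, D.δ {a, b} =
      ∫ ω, ∑ a ∈ A, ∑ b ∈ A, |φ a ω - φ b ω| ∂μ := by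
    rw [integral_finset_sum _ fun a _ => integrable_finset_sum _ fun b _ => habs a b]
    refine Finset.sum_congr rfl fun a _ => ?_
    rw [integral_finset_sum _ fun b _ => habs a b]
    exact Finset.sum_congr rfl fun b _ => hpair a b
  rw [hδ, hsum]
  calc ((A.card : ℝ) - 1) * ∫ ω, pairSup φ A ω ∂μ
      = ∫ ω, ((A.card : ℝ) - 1) * pairSup φ A ω ∂μ := (integral_const_mul _ _).symm
    _ ≤ ∫ ω, (1 / 2) * ∑ a ∈ A, ∑ b ∈ A, |φ a ω - φ b ω| ∂μ := by
        apply integral_mono_of_nonneg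
        · exact Filter.Eventually.of_forall fun ω =>
            mul_nonneg (by linarith) (pairSup_nonneg φ A ω)
        · exact hFint.const_mul _
        · exact Filter.Eventually.of_forall fun ω => key_pointwise φ A ω
    _ = (1 / 2) * ∫ ω, ∑ a ∈ A, ∑ b ∈ A, |φ a ω - φ b ω| ∂μ := integral_const_mul _ _
end

section
/- Every measure diversity is L₁-embeddable: if (M, Σ, μ) is a measure space and X is the collection of finite-measure sets in Σ with δ({E₁,…,E_k}) = μ(⋃ᵢ Eᵢ \ ⋂ᵢ Eᵢ), then the map E ↦ 𝟙_E into L₁(M, Σ, μ) satisfies δ({E₁,…,E_k}) = ∫ diam{𝟙_{E₁}(ω), …, 𝟙_{E_k}(ω)} dμ(ω) for every finite collection. -/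
open Finset MeasureTheory

/-- every measure diversity is L₁-embeddable: the map `E ↦ 𝟙_E`
into `L₁(M, Σ, μ)` is an isometric embedding, i.e.
`μ(⋃ᵢEᵢ \ ⋂ᵢEᵢ) = ∫ diam{𝟙_{E₁}(ω), …, 𝟙_{E_k}(ω)} dμ(ω)`. -/
theorem measureDiv_l1_embeddable {M : Type*} [MeasurableSpace M] (μ : Measure M)
    (A : Finset {E : Set M // MeasurableSet E ∧ μ E < ⊤}) :
    (μ ((⋃ E ∈ A, (E : Set M)) \ ⋂ E ∈ A, (E : Set M))).toReal =
      ∫ ω, (if h : A.Nonempty then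
          (A ×ˢ A).sup' (h.product h)
            (fun p => |Set.indicator (p.1 : Set M) (fun _ => (1 : ℝ)) ω -
                        Set.indicator (p.2 : Set M) (fun _ => (1 : ℝ)) ω|)
        else 0) ∂μ := by
  classical
  set S : Set M := (⋃ E ∈ A, (E : Set M)) \ ⋂ E ∈ A, (E : Set M) with hSdef
  by_cases h : A.Nonempty
  · have hmeas : MeasurableSet S := by
      apply MeasurableSet.diff
      · exact MeasurableSet.biUnion A.countable_toSet (fun E _ => E.2.1)
      · exact MeasurableSet.biInter A.countable_toSet (fun E _ => E.2.1)
    have hpt : ∀ ω, (if h : A.Nonempty then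
          (A ×ˢ A).sup' (h.product h)
            (fun p => |Set.indicator (p.1 : Set M) (fun _ => (1 : ℝ)) ω -
                        Set.indicator (p.2 : Set M) (fun _ => (1 : ℝ)) ω|)
        else 0) = Set.indicator S (fun _ => (1 : ℝ)) ω := by
      intro ω
      rw [dif_pos h]
      by_cases hω : ω ∈ S
      · rw [Set.indicator_of_mem hω]
        obtain ⟨hu, hi⟩ := hω
        simp only [Set.mem_iUnion] at hu
        obtain ⟨E, hE, hωE⟩ := hu
        have hF : ∃ F ∈ A, ω ∉ (F : Set M) := by
          by_contra hc
          push_neg at hc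
          exact hi (Set.mem_iInter₂.mpr hc)
        obtain ⟨F, hF, hωF⟩ := hF
        apply le_antisymm
        · apply Finset.sup'_le
          intro p hp
          simp only [Set.indicator]
          split_ifs <;> norm_num
        · have h1 : (1 : ℝ) = |Set.indicator (E : Set M) (fun _ => (1 : ℝ)) ω -
              Set.indicator (F : Set M) (fun _ => (1 : ℝ)) ω| := by
            rw [Set.indicator_of_mem hωE, Set.indicator_of_notMem hωF]
            norm_num
          exact h1.le.trans (Finset.le_sup' (fun p : {E : Set M // MeasurableSet E ∧ μ E < ⊤} × {E : Set M // MeasurableSet E ∧ μ E < ⊤} => |Set.indicator (p.1 : Set M) (fun _ => (1 : ℝ)) ω - Set.indicator (p.2 : Set M) (fun _ => (1 : ℝ)) ω|) (b := (E, F)) (Finset.mem_product.mpr ⟨hE, hF⟩))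
      · rw [Set.indicator_of_notMem hω]
        have hall : (∀ E ∈ A, ω ∉ (E : Set M)) ∨ (∀ E ∈ A, ω ∈ (E : Set M)) := by
          by_cases hu : ω ∈ ⋃ E ∈ A, (E : Set M)
          · right
            have hi : ω ∈ ⋂ E ∈ A, (E : Set M) := by
              by_contra hi
              exact hω ⟨hu, hi⟩
            exact fun E hE => Set.mem_iInter₂.mp hi E hE
          · left
            intro E hE hωE
            exact hu (Set.mem_iUnion₂.mpr ⟨E, hE, hωE⟩)
        have hzero : ∀ p ∈ A ×ˢ A,
            |Set.indicator (p.1 : Set M) (fun _ => (1 : ℝ)) ω -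
              Set.indicator (p.2 : Set M) (fun _ => (1 : ℝ)) ω| = 0 := by
          intro p hp
          obtain ⟨hp1, hp2⟩ := Finset.mem_product.mp hp
          rcases hall with hall | hall
          · rw [Set.indicator_of_notMem (hall _ hp1),
              Set.indicator_of_notMem (hall _ hp2)]
            simp
          · rw [Set.indicator_of_mem (hall _ hp1), Set.indicator_of_mem (hall _ hp2)]
            simp
        rw [Finset.sup'_congr (h.product h) rfl hzero]
        simp
    calc (μ S).toReal = ∫ ω, Set.indicator S (fun _ => (1 : ℝ)) ω ∂μ := by
          exact (MeasureTheory.integral_indicator_one (μ := μ) hmeas).symm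
      _ = _ := by
          refine integral_congr_ae (Filter.Eventually.of_forall fun ω => ?_)
          exact (hpt ω).symm
  · have hA : A = ∅ := Finset.not_nonempty_iff_eq_empty.mp h
    subst hA
    simp only [dif_neg h, integral_zero]
    simp [hSdef]
end

section
/- Every L₁-embeddable diversity can be isometrically embedded into a measure diversity: given functions f in L₁(Ω, 𝒜, μ), the map Φ(f) = {(ω, y) : y ∈ [0, f(ω)] if f(ω) ≥ 0, y ∈ [f(ω), 0) if f(ω) < 0} into the product measure space (Ω × ℝ, μ × λ) satisfies δ₁({f₁,…,f_k}) = (μ×λ)(⋃ᵢ Φ(fᵢ) \ ⋂ᵢ Φ(fᵢ)) for every finite collection. -/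
open Finset MeasureTheory

/-- `φ(x) = [0, x]` if `x ≥ 0` and `[x, 0)` if `x < 0`. -/
noncomputable def phiInterval (x : ℝ) : Set ℝ :=
  if 0 ≤ x then Set.Icc 0 x else Set.Ico x 0

/-- `Φ(f) = {(ω, y) : y ∈ φ(f(ω))} ⊆ Ω × ℝ`. -/
noncomputable def PhiSet {Ω : Type*} (f : Ω → ℝ) : Set (Ω × ℝ) :=
  {p : Ω × ℝ | p.2 ∈ phiInterval (f p.1)}

lemma mem_phiInterval {x y : ℝ} :
    y ∈ phiInterval x ↔ (0 ≤ y ∧ y ≤ x) ∨ (x ≤ y ∧ y < 0) := by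
  unfold phiInterval
  split_ifs with h
  · simp only [Set.mem_Icc]
    constructor
    · rintro ⟨h1, h2⟩; exact Or.inl ⟨h1, h2⟩
    · rintro (⟨h1, h2⟩ | ⟨h1, h2⟩)
      · exact ⟨h1, h2⟩
      · constructor <;> linarith
  · simp only [Set.mem_Ico]
    constructor
    · rintro ⟨h1, h2⟩; exact Or.inr ⟨h1, h2⟩
    · rintro (⟨h1, h2⟩ | ⟨h1, h2⟩)
      · constructor <;> linarith
      · exact ⟨h1, h2⟩

lemma measurable_phiSet {Ω : Type*} [MeasurableSpace Ω] {f : Ω → ℝ} (hf : Measurable f) :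
    MeasurableSet (PhiSet f) := by
  have : PhiSet f = {p : Ω × ℝ | (0 ≤ p.2 ∧ p.2 ≤ f p.1) ∨ (f p.1 ≤ p.2 ∧ p.2 < 0)} := by
    ext p; exact mem_phiInterval
  rw [this]
  exact ((measurableSet_le measurable_const measurable_snd).inter
      (measurableSet_le measurable_snd (hf.comp measurable_fst))).union
    ((measurableSet_le (hf.comp measurable_fst) measurable_snd).inter
      (measurableSet_lt measurable_snd measurable_const))

lemma phi_subset_union {a b c : ℝ} (h1 : a ≤ b) (h2 : b ≤ c) :
    phiInterval b ⊆ phiInterval a ∪ phiInterval c := by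
  intro y hy
  rw [mem_phiInterval] at hy
  rcases hy with ⟨h3, h4⟩ | ⟨h3, h4⟩
  · exact Or.inr (mem_phiInterval.mpr (Or.inl ⟨h3, by linarith⟩))
  · exact Or.inl (mem_phiInterval.mpr (Or.inr ⟨by linarith, h4⟩))

lemma inter_subset_phi {a b c : ℝ} (h1 : a ≤ b) (h2 : b ≤ c) :
    phiInterval a ∩ phiInterval c ⊆ phiInterval b := by
  rintro y ⟨hm, hM⟩
  rw [mem_phiInterval] at hm hM ⊢
  rcases hm with ⟨a1, a2⟩ | ⟨a1, a2⟩ <;> rcases hM with ⟨b1, b2⟩ | ⟨b1, b2⟩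
  · exact Or.inl ⟨a1, by linarith⟩
  · linarith
  · linarith
  · exact Or.inr ⟨by linarith, b2⟩

lemma volume_phi_sdiff {m M : ℝ} (h : m ≤ M) :
    volume ((phiInterval m ∪ phiInterval M) \ (phiInterval m ∩ phiInterval M)) =
      ENNReal.ofReal (M - m) := by
  rcases le_or_gt 0 m with hm | hm
  · have hM : 0 ≤ M := le_trans hm h
    have e1 : phiInterval m = Set.Icc 0 m := if_pos hm
    have e2 : phiInterval M = Set.Icc 0 M := if_pos hM
    have hsub : Set.Icc (0:ℝ) m ⊆ Set.Icc 0 M := Set.Icc_subset_Icc le_rfl h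
    rw [e1, e2, Set.union_eq_self_of_subset_left hsub, Set.inter_eq_self_of_subset_left hsub,
      measure_diff hsub measurableSet_Icc.nullMeasurableSet (by simp),
      Real.volume_Icc, Real.volume_Icc, ← ENNReal.ofReal_sub _ (by linarith)]
    ring_nf
  · rcases le_or_gt 0 M with hM | hM
    · have e1 : phiInterval m = Set.Ico m 0 := if_neg (not_le.mpr hm)
      have e2 : phiInterval M = Set.Icc 0 M := if_pos hM
      have hdisj : Disjoint (Set.Ico m (0:ℝ)) (Set.Icc 0 M) := by
        rw [Set.disjoint_left]; rintro y ⟨_, h2⟩ ⟨h3, _⟩; linarith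
      rw [e1, e2, Set.disjoint_iff_inter_eq_empty.mp hdisj, Set.diff_empty,
        measure_union hdisj measurableSet_Icc, Real.volume_Ico, Real.volume_Icc,
        ← ENNReal.ofReal_add (by linarith) (by linarith)]
      ring_nf
    · have e1 : phiInterval m = Set.Ico m 0 := if_neg (not_le.mpr hm)
      have e2 : phiInterval M = Set.Ico M 0 := if_neg (not_le.mpr hM)
      have hsub : Set.Ico M (0:ℝ) ⊆ Set.Ico m 0 := Set.Ico_subset_Ico h le_rfl
      rw [e1, e2, Set.union_eq_self_of_subset_right hsub, Set.inter_eq_self_of_subset_right hsub,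
        measure_diff hsub measurableSet_Ico.nullMeasurableSet (by simp),
        Real.volume_Ico, Real.volume_Ico, ← ENNReal.ofReal_sub _ (by linarith)]
      ring_nf

lemma slice_volume {ι : Type*} (F : Finset ι) (h : F.Nonempty) (x : ι → ℝ) :
    volume ((⋃ i ∈ F, phiInterval (x i)) \ ⋂ i ∈ F, phiInterval (x i)) =
      ENNReal.ofReal (F.sup' h x - F.inf' h x) := by
  have hmM : F.inf' h x ≤ F.sup' h x :=
    le_trans (F.inf'_le x h.choose_spec) (F.le_sup' x h.choose_spec)
  have hu : (⋃ i ∈ F, phiInterval (x i)) =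
      phiInterval (F.inf' h x) ∪ phiInterval (F.sup' h x) := by
    apply Set.Subset.antisymm
    · exact Set.iUnion₂_subset fun i hi => phi_subset_union (F.inf'_le _ hi) (F.le_sup' _ hi)
    · obtain ⟨i, hi, hie⟩ := F.exists_mem_eq_inf' h x
      obtain ⟨j, hj, hje⟩ := F.exists_mem_eq_sup' h x
      apply Set.union_subset
      · rw [hie]; exact fun y hy => Set.mem_biUnion hi hy
      · rw [hje]; exact fun y hy => Set.mem_biUnion hj hy
  have hi' : (⋂ i ∈ F, phiInterval (x i)) =
      phiInterval (F.inf' h x) ∩ phiInterval (F.sup' h x) := by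
    apply Set.Subset.antisymm
    · obtain ⟨i, hi, hie⟩ := F.exists_mem_eq_inf' h x
      obtain ⟨j, hj, hje⟩ := F.exists_mem_eq_sup' h x
      apply Set.subset_inter
      · rw [hie]; exact Set.biInter_subset_of_mem hi
      · rw [hje]; exact Set.biInter_subset_of_mem hj
    · exact Set.subset_iInter₂ fun i hi => inter_subset_phi (F.inf'_le _ hi) (F.le_sup' _ hi)
  rw [hu, hi', volume_phi_sdiff hmM]

lemma integrable_finset_sup' {ι Ω : Type*} [MeasurableSpace Ω] {μ : Measure Ω}
    (F : Finset ι) (h : F.Nonempty) (f : ι → Ω → ℝ) (hf : ∀ i ∈ F, Integrable (f i) μ) :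
    Integrable (fun ω => F.sup' h (fun i => f i ω)) μ := by
  revert hf
  induction h using Finset.Nonempty.cons_induction with
  | singleton i => intro hf; simpa using hf i (by simp)
  | cons i s hi hs ih =>
    intro hf
    simp only [Finset.sup'_cons hs]
    exact (hf i (by simp)).sup (ih fun j hj => hf j (by simp [hj]))

lemma integrable_finset_inf' {ι Ω : Type*} [MeasurableSpace Ω] {μ : Measure Ω}
    (F : Finset ι) (h : F.Nonempty) (f : ι → Ω → ℝ) (hf : ∀ i ∈ F, Integrable (f i) μ) :
    Integrable (fun ω => F.inf' h (fun i => f i ω)) μ := by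
  revert hf
  induction h using Finset.Nonempty.cons_induction with
  | singleton i => intro hf; simpa using hf i (by simp)
  | cons i s hi hs ih =>
    intro hf
    simp only [Finset.inf'_cons hs]
    exact (hf i (by simp)).inf (ih fun j hj => hf j (by simp [hj]))

/-- every L₁-embeddable diversity embeds isometrically into a
measure diversity: for integrable functions `f₁,…,f_k` on `Ω`,
`∫ (maxᵢ fᵢ(ω) − minᵢ fᵢ(ω)) dμ(ω) = (μ×λ)(⋃ᵢ Φ(fᵢ) \ ⋂ᵢ Φ(fᵢ))`. -/
theorem l1_embeds_in_measureDiv {Ω : Type*} [MeasurableSpace Ω] (μ : Measure Ω)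
    [SigmaFinite μ] (F : Finset (Ω → ℝ))
    (hint : ∀ f ∈ F, Integrable f μ) (hmeas : ∀ f ∈ F, Measurable f) :
    (∫ ω, (if h : F.Nonempty then
        F.sup' h (fun f => f ω) - F.inf' h (fun f => f ω) else 0) ∂μ) =
      ((μ.prod volume) ((⋃ f ∈ F, PhiSet f) \ ⋂ f ∈ F, PhiSet f)).toReal := by
  rcases F.eq_empty_or_nonempty with rfl | hF
  · simp
  · simp only [dif_pos hF]
    set S := (⋃ f ∈ F, PhiSet f) \ ⋂ f ∈ F, PhiSet f with hS
    have hSm : MeasurableSet S := by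
      refine MeasurableSet.diff ?_ ?_
      · exact MeasurableSet.biUnion F.countable_toSet fun f hf => measurable_phiSet (hmeas f hf)
      · exact MeasurableSet.biInter F.countable_toSet fun f hf => measurable_phiSet (hmeas f hf)
    have hprod : (μ.prod volume) S = ∫⁻ ω, volume (Prod.mk ω ⁻¹' S) ∂μ :=
      Measure.prod_apply hSm
    have hslice : ∀ ω, Prod.mk ω ⁻¹' S =
        (⋃ f ∈ F, phiInterval (f ω)) \ ⋂ f ∈ F, phiInterval (f ω) := by
      intro ω
      simp only [hS, Set.preimage_diff, Set.preimage_iUnion, Set.preimage_iInter]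
      rfl
    have hvol : ∀ ω, volume (Prod.mk ω ⁻¹' S) =
        ENNReal.ofReal (F.sup' hF (fun f => f ω) - F.inf' hF (fun f => f ω)) := by
      intro ω
      rw [hslice ω, slice_volume F hF (fun f => f ω)]
    have hintg : Integrable (fun ω => F.sup' hF (fun f => f ω) - F.inf' hF (fun f => f ω)) μ :=
      (integrable_finset_sup' F hF _ hint).sub (integrable_finset_inf' F hF _ hint)
    have hnn : 0 ≤ᵐ[μ] fun ω => F.sup' hF (fun f => f ω) - F.inf' hF (fun f => f ω) :=
      Filter.Eventually.of_forall fun ω =>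
        sub_nonneg.mpr (le_trans (F.inf'_le (fun f => f ω) hF.choose_spec)
          (F.le_sup' (fun f => f ω) hF.choose_spec))
    rw [hprod]
    simp_rw [hvol]
    rw [← MeasureTheory.ofReal_integral_eq_lintegral_ofReal hintg hnn,
      ENNReal.toReal_ofReal (integral_nonneg_of_ae hnn)]
end

section
/- Let C ⊆ 𝒫(X) be a chain of subsets of a finite set X all containing a fixed point x₀ and such that every x ∈ X is contained in some member of C, and let λ_U ≥ 0 for U ∈ C. Then the diversity δ^C(A) = Σ_{U ∈ C} λ_U δ_U(A) embeds isometrically into ℝ with the diameter diversity, via φ(x) = δ^C({x₀, x}). -/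
open Finset

/-- The cut diversity `δ_U`. -/
def cutDiv {X : Type*} [DecidableEq X] (U A : Finset X) : ℝ :=
  if (A ∩ U).Nonempty ∧ (A \ U).Nonempty then 1 else 0

/-- a nonnegative combination of cut diversities coming from a
chain of sets all containing `x₀` (and covering `X`) embeds isometrically into
the diameter diversity on `ℝ` via `φ(x) = δ^C({x₀, x})`. -/
theorem chain_cut_diversity_embeds_in_R {X : Type*} [DecidableEq X]
    (C : Finset (Finset X)) (x₀ : X)
    (hchain : IsChain (· ⊆ ·) (C : Set (Finset X)))
    (hx₀ : ∀ U ∈ C, x₀ ∈ U) (hcov : ∀ x : X, ∃ U ∈ C, x ∈ U)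
    (lam : Finset X → ℝ) (hlam : ∀ U, 0 ≤ lam U) :
    let δC : Finset X → ℝ := fun A => ∑ U ∈ C, lam U * cutDiv U A
    let φ : X → ℝ := fun x => δC {x₀, x}
    ∀ A : Finset X,
      (if h : (A.image φ).Nonempty then
        (A.image φ).sup' h id - (A.image φ).inf' h id else 0) = δC A := by
  intro δC φ A
  set f : X → Finset (Finset X) := fun x => C.filter (fun U => x ∉ U) with hf
  have hφ : ∀ x, φ x = ∑ U ∈ f x, lam U := by
    intro x
    show ∑ U ∈ C, lam U * cutDiv U {x₀, x} = _
    rw [hf]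
    simp only [Finset.sum_filter]
    refine Finset.sum_congr rfl fun U hU => ?_
    by_cases hx : x ∈ U
    · have h1 : ¬((({x₀, x} : Finset X) \ U).Nonempty) := by
        simp [Finset.sdiff_nonempty, Finset.insert_subset_iff, hx₀ U hU, hx]
      simp [cutDiv, h1, hx]
    · have h1 : ((({x₀, x} : Finset X) ∩ U).Nonempty) := ⟨x₀, by simp [hx₀ U hU]⟩
      have h2 : ((({x₀, x} : Finset X) \ U).Nonempty) := ⟨x, by simp [hx]⟩
      simp [cutDiv, h1, h2, hx]
  have hcomp : ∀ x y : X, f x ⊆ f y ∨ f y ⊆ f x := by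
    intro x y
    by_contra hcon
    push_neg at hcon
    obtain ⟨h1, h2⟩ := hcon
    obtain ⟨U, hU, hUy⟩ := Finset.not_subset.mp h1
    obtain ⟨V, hV, hVx⟩ := Finset.not_subset.mp h2
    simp only [hf, Finset.mem_filter, not_and, not_not] at hU hV hUy hVx
    have hyU : y ∈ U := hUy hU.1
    have hxV : x ∈ V := hVx hV.1
    rcases eq_or_ne U V with rfl | hne
    · exact hU.2 hxV
    · rcases hchain hU.1 hV.1 hne with hs | hs
      · exact hV.2 (hs hyU)
      · exact hU.2 (hs hxV)
  by_cases h : (A.image φ).Nonempty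
  · rw [dif_pos h]
    have hA : A.Nonempty := Finset.image_nonempty.mp h
    obtain ⟨a, haA, hamax⟩ := A.exists_max_image (fun x => (f x).card) hA
    obtain ⟨b, hbA, hbmin⟩ := A.exists_min_image (fun x => (f x).card) hA
    have ha : ∀ x ∈ A, f x ⊆ f a := by
      intro x hx
      rcases hcomp x a with hs | hs
      · exact hs
      · exact (Finset.eq_of_subset_of_card_le hs (hamax x hx)).symm ▸ Finset.Subset.rfl
    have hb : ∀ x ∈ A, f b ⊆ f x := by
      intro x hx
      rcases hcomp b x with hs | hs
      · exact hs
      · exact (Finset.eq_of_subset_of_card_le hs (hbmin x hx)) ▸ Finset.Subset.rfl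
    have hmono : ∀ x y : X, f x ⊆ f y → φ x ≤ φ y := by
      intro x y hs
      rw [hφ, hφ]
      exact Finset.sum_le_sum_of_subset_of_nonneg hs (fun U _ _ => hlam U)
    have hsup : (A.image φ).sup' h id = φ a := by
      apply le_antisymm
      · apply Finset.sup'_le
        intro c hc
        obtain ⟨x, hx, rfl⟩ := Finset.mem_image.mp hc
        exact hmono x a (ha x hx)
      · exact Finset.le_sup' id (Finset.mem_image_of_mem φ haA)
    have hinf : (A.image φ).inf' h id = φ b := by
      apply le_antisymm
      · exact Finset.inf'_le id (Finset.mem_image_of_mem φ hbA)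
      · apply Finset.le_inf'
        intro c hc
        obtain ⟨x, hx, rfl⟩ := Finset.mem_image.mp hc
        exact hmono b x (hb x hx)
    have hba : f b ⊆ f a := hb a haA
    have key : ∑ U ∈ C, lam U * cutDiv U A = ∑ U ∈ f a \ f b, lam U := by
      have hset : f a \ f b = C.filter (fun U => a ∉ U ∧ b ∈ U) := by
        ext U
        simp only [hf, Finset.mem_sdiff, Finset.mem_filter]
        tauto
      rw [hset, Finset.sum_filter]
      refine Finset.sum_congr rfl fun U hU => ?_
      by_cases hc : a ∉ U ∧ b ∈ U
      · have h1 : cutDiv U A = 1 := by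
          rw [cutDiv, if_pos]
          exact ⟨⟨b, Finset.mem_inter.mpr ⟨hbA, hc.2⟩⟩, ⟨a, Finset.mem_sdiff.mpr ⟨haA, hc.1⟩⟩⟩
        rw [h1, if_pos hc, mul_one]
      · have h1 : cutDiv U A = 0 := by
          rw [cutDiv, if_neg]
          rintro ⟨⟨x, hx⟩, ⟨y, hy⟩⟩
          rw [Finset.mem_inter] at hx
          rw [Finset.mem_sdiff] at hy
          apply hc
          constructor
          · intro haU
            have hUa : U ∈ f a := ha y hy.1 (by simp [hf, hU, hy.2])
            simp only [hf, Finset.mem_filter] at hUa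
            exact hUa.2 haU
          · by_contra hbU
            have hUx : U ∈ f x := hb x hx.1 (by simp [hf, hU, hbU])
            simp only [hf, Finset.mem_filter] at hUx
            exact hUx.2 hx.2
        rw [h1, if_neg hc, mul_zero]
    show (A.image φ).sup' h id - (A.image φ).inf' h id = ∑ U ∈ C, lam U * cutDiv U A
    rw [hsup, hinf, hφ, hφ, key]
    have hsd := Finset.sum_sdiff (f := lam) hba
    linarith
  · rw [dif_neg h]
    have hA : A = ∅ := by
      by_contra hne
      exact h (Finset.image_nonempty.mpr (Finset.nonempty_iff_ne_empty.mpr hne))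
    subst hA
    show (0 : ℝ) = ∑ U ∈ C, lam U * cutDiv U ∅
    simp [cutDiv]
end

section
/- Let δ_diam^{(1)} be the diameter diversity on ℝ^k with respect to the ℓ₁ metric and δ₁ the ℓ₁ diversity on ℝ^k. Then for all finite A ⊂ ℝ^k, δ_diam^{(1)}(A) ≤ δ₁(A) ≤ k·δ_diam^{(1)}(A), and both bounds are tight (e.g. equality in the upper bound for A = {±e₁, …, ±e_k}). -/
set_option maxHeartbeats 1000000


open Finset

/-- The ℓ₁ diversity on `ℝ^k`. -/
noncomputable def l1Div {k : ℕ} (A : Finset (Fin k → ℝ)) : ℝ :=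
  ∑ i : Fin k,
    if h : A.Nonempty then (A ×ˢ A).sup' (h.product h) (fun p => |p.1 i - p.2 i|) else 0

/-- The diameter diversity on `ℝ^k` with respect to the ℓ₁ metric. -/
noncomputable def diamDiv1 {k : ℕ} (A : Finset (Fin k → ℝ)) : ℝ :=
  if h : A.Nonempty then
    (A ×ˢ A).sup' (h.product h) (fun p => ∑ i : Fin k, |p.1 i - p.2 i|) else 0

lemma memE_abs {k : ℕ} (x : Fin k → ℝ)
    (hx : x ∈ (Finset.univ.image fun i : Fin k => Pi.single i (1 : ℝ)) ∪
          (Finset.univ.image fun i : Fin k => -Pi.single i (1 : ℝ))) :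
    (∀ j, |x j| ≤ 1) ∧ (∑ j, |x j| = 1) := by
  simp only [Finset.mem_union, Finset.mem_image, Finset.mem_univ, true_and] at hx
  obtain (⟨i, rfl⟩ | ⟨i, rfl⟩) := hx <;>
  · constructor
    · intro j
      simp [Pi.single_apply]
      split <;> norm_num
    · simp only [Pi.single_apply, Pi.neg_apply, abs_neg, apply_ite abs, abs_one, abs_zero]
      rw [Finset.sum_ite_eq' Finset.univ i (fun _ => (1:ℝ))]
      simp

lemma part1 {k : ℕ} (A : Finset (Fin k → ℝ)) : diamDiv1 A ≤ l1Div A ∧ l1Div A ≤ (k : ℝ) * diamDiv1 A := by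
  by_cases h : A.Nonempty
  · constructor
    · rw [diamDiv1, dif_pos h]
      apply Finset.sup'_le
      intro p hp
      rw [l1Div]
      apply Finset.sum_le_sum
      intro i _
      rw [dif_pos h]
      exact Finset.le_sup' (fun p => |p.1 i - p.2 i|) hp
    · rw [l1Div, diamDiv1, dif_pos h]
      calc (∑ i : Fin k, if h : A.Nonempty then (A ×ˢ A).sup' (h.product h) (fun p => |p.1 i - p.2 i|) else 0)
          ≤ ∑ _i : Fin k, (A ×ˢ A).sup' (h.product h) (fun p => ∑ j, |p.1 j - p.2 j|) := by
            apply Finset.sum_le_sum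
            intro i _
            rw [dif_pos h]
            apply Finset.sup'_le
            intro p hp
            refine le_trans ?_ (Finset.le_sup' (fun p => ∑ j, |p.1 j - p.2 j|) hp)
            exact Finset.single_le_sum (f := fun j => |p.1 j - p.2 j|) (fun j _ => abs_nonneg _) (Finset.mem_univ i)
        _ = (k : ℝ) * (A ×ˢ A).sup' (h.product h) (fun p => ∑ j, |p.1 j - p.2 j|) := by
            simp [Finset.sum_const, nsmul_eq_mul]
  · simp only [l1Div, diamDiv1, dif_neg h]
    simp

lemma part2 (k : ℕ) (hk : 0 < k) :
    l1Div ((Finset.univ.image fun i : Fin k => Pi.single i (1 : ℝ)) ∪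
          (Finset.univ.image fun i : Fin k => -Pi.single i (1 : ℝ)))
      = (k : ℝ) * diamDiv1 ((Finset.univ.image fun i : Fin k => Pi.single i (1 : ℝ)) ∪
          (Finset.univ.image fun i : Fin k => -Pi.single i (1 : ℝ))) := by
  set E := (Finset.univ.image fun i : Fin k => Pi.single i (1 : ℝ)) ∪
          (Finset.univ.image fun i : Fin k => -Pi.single i (1 : ℝ)) with hEdef

  have i0 : Fin k := ⟨0, hk⟩
  have hmem1 : Pi.single i0 (1:ℝ) ∈ E := by
    simp [E, Finset.mem_union, Finset.mem_image]
  have hE : E.Nonempty := ⟨_, hmem1⟩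
  have habs : ∀ x ∈ E, (∀ j, |x j| ≤ 1) ∧ (∑ j, |x j| = 1) := fun x hx => memE_abs x hx
  have hmemE : ∀ i : Fin k, Pi.single i (1:ℝ) ∈ E ∧ -Pi.single i (1:ℝ) ∈ E := by
    intro i
    constructor <;> simp [E, Finset.mem_union, Finset.mem_image]
  have hdiam : diamDiv1 E = 2 := by
    rw [diamDiv1, dif_pos hE]
    apply le_antisymm
    · apply Finset.sup'_le
      intro p hp
      rw [Finset.mem_product] at hp
      calc ∑ j, |p.1 j - p.2 j| ≤ ∑ j, (|p.1 j| + |p.2 j|) :=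
            Finset.sum_le_sum fun j _ => abs_sub _ _
        _ = 2 := by
            rw [Finset.sum_add_distrib, (habs _ hp.1).2, (habs _ hp.2).2]; norm_num
    · have hp : (Pi.single i0 (1:ℝ), -Pi.single i0 (1:ℝ)) ∈ E ×ˢ E :=
        Finset.mem_product.mpr ⟨(hmemE i0).1, (hmemE i0).2⟩
      refine le_trans ?_ (Finset.le_sup' (fun p => ∑ j, |p.1 j - p.2 j|) hp)
      have h2 : ∀ j, |(Pi.single i0 1 : Fin k → ℝ) j - (-(Pi.single i0 1 : Fin k → ℝ)) j| = 2 * |(Pi.single i0 1 : Fin k → ℝ) j| := by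
        intro j
        simp [Pi.single_apply]
        split <;> norm_num
      simp only [h2]
      rw [← Finset.mul_sum, (habs _ hmem1).2]
      norm_num
  have hl1 : l1Div E = 2 * k := by
    rw [l1Div]
    have : ∀ i : Fin k, (if h : E.Nonempty then (E ×ˢ E).sup' (h.product h) (fun p => |p.1 i - p.2 i|) else 0) = 2 := by
      intro i
      rw [dif_pos hE]
      apply le_antisymm
      · apply Finset.sup'_le
        intro p hp
        rw [Finset.mem_product] at hp
        calc |p.1 i - p.2 i| ≤ |p.1 i| + |p.2 i| := abs_sub _ _
          _ ≤ 1 + 1 := add_le_add ((habs _ hp.1).1 i) ((habs _ hp.2).1 i)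
          _ = 2 := by norm_num
      · have hp : (Pi.single i (1:ℝ), -Pi.single i (1:ℝ)) ∈ E ×ˢ E :=
          Finset.mem_product.mpr ⟨(hmemE i).1, (hmemE i).2⟩
        refine le_trans ?_ (Finset.le_sup' (fun p => |p.1 i - p.2 i|) hp)
        simp [Pi.single_apply]
        norm_num
    rw [Finset.sum_congr rfl (fun i _ => this i)]
    simp [mul_comm]
  rw [hl1, hdiam]
  ring

/-- `δ_diam^{(1)}(A) ≤ δ₁(A) ≤ k·δ_diam^{(1)}(A)` for all finite
`A ⊂ ℝ^k`, with the upper bound tight, attained at `A = {±e₁, …, ±e_k}`. -/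
theorem l1Div_diamDiv1_bounds (k : ℕ) :
    (∀ A : Finset (Fin k → ℝ), diamDiv1 A ≤ l1Div A ∧ l1Div A ≤ (k : ℝ) * diamDiv1 A) ∧
    (0 < k →
      let E : Finset (Fin k → ℝ) :=
        (Finset.univ.image fun i : Fin k => Pi.single i (1 : ℝ)) ∪
          (Finset.univ.image fun i : Fin k => -Pi.single i (1 : ℝ))
      l1Div E = (k : ℝ) * diamDiv1 E) := by
  exact ⟨fun A => part1 A, fun hk => part2 k hk⟩
end

section
/- Let X be a set of n points and δ the diversity on X with δ(A) = |A| − 1 for all nonempty A ⊆ X (and δ(∅) = 0). Then every embedding φ : X → ℝ^k has distortion at least (n − 1)/k with respect to the ℓ₁ diversity on ℝ^k. -/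
open Finset

/-- The diversity `δ(A) = |A| − 1` on nonempty sets (and `δ(∅) = 0`). -/
noncomputable def cardDiv {X : Type*} (A : Finset X) : ℝ :=
  if A.Nonempty then (A.card : ℝ) - 1 else 0

lemma l1Div_term_nonneg {k : ℕ} (A : Finset (Fin k → ℝ)) (i : Fin k) :
    0 ≤ if h : A.Nonempty then (A ×ˢ A).sup' (h.product h) (fun p => |p.1 i - p.2 i|) else 0 := by
  by_cases h : A.Nonempty
  · rw [dif_pos h]
    obtain ⟨u, hu⟩ := h
    have hm : (u, u) ∈ A ×ˢ A := Finset.mem_product.mpr ⟨hu, hu⟩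
    have := Finset.le_sup' (fun p : (Fin k → ℝ) × (Fin k → ℝ) => |p.1 i - p.2 i|) hm
    exact le_trans (abs_nonneg _) this
  · rw [dif_neg h]

lemma pair_le_l1Div {k : ℕ} (A : Finset (Fin k → ℝ)) (hA : A.Nonempty)
    {u v : Fin k → ℝ} (hu : u ∈ A) (hv : v ∈ A) (i : Fin k) :
    |u i - v i| ≤ l1Div A := by
  unfold l1Div
  have h1 : |u i - v i| ≤
      if h : A.Nonempty then (A ×ˢ A).sup' (h.product h) (fun p => |p.1 i - p.2 i|) else 0 := by
    rw [dif_pos hA]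
    have hm : (u, v) ∈ A ×ˢ A := Finset.mem_product.mpr ⟨hu, hv⟩
    exact Finset.le_sup' (fun p : (Fin k → ℝ) × (Fin k → ℝ) => |p.1 i - p.2 i|) hm
  refine h1.trans (Finset.single_le_sum (f := fun j =>
      if h : A.Nonempty then (A ×ˢ A).sup' (h.product h) (fun p => |p.1 j - p.2 j|) else 0)
      (fun j _ => l1Div_term_nonneg A j) (Finset.mem_univ i))

/-- any embedding of the `n`-point diversity `δ(A) = |A| − 1` into
the ℓ₁ diversity on `ℝ^k` has distortion `c₁·c₂` at least `(n − 1)/k`. -/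
theorem cardDiv_distortion_lower_bound {X : Type*} [Fintype X] [DecidableEq X]
    (k : ℕ) (hk : 0 < k) (φ : X → Fin k → ℝ) (c₁ c₂ : ℝ) (hc₁ : 0 < c₁) (hc₂ : 0 < c₂)
    (hemb : ∀ A : Finset X,
      (1 / c₁) * cardDiv A ≤ l1Div (A.image φ) ∧ l1Div (A.image φ) ≤ c₂ * cardDiv A) :
    ((Fintype.card X : ℝ) - 1) / (k : ℝ) ≤ c₁ * c₂ := by
  have hkR : (0 : ℝ) < k := by exact_mod_cast hk
  by_cases hn : (Finset.univ : Finset X).Nonempty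
  · -- lower bound
    have hlow := (hemb Finset.univ).1
    have hcard : cardDiv (Finset.univ : Finset X) = (Fintype.card X : ℝ) - 1 := by
      rw [cardDiv, if_pos hn, Finset.card_univ]
    -- upper bound: l1Div (univ.image φ) ≤ k * c₂
    have himg : ((Finset.univ : Finset X).image φ).Nonempty := hn.image φ
    have hup : l1Div ((Finset.univ : Finset X).image φ) ≤ (k : ℝ) * c₂ := by
      unfold l1Div
      simp only [dif_pos himg]
      calc ∑ i : Fin k, (((Finset.univ : Finset X).image φ) ×ˢ ((Finset.univ : Finset X).image φ)).sup'
              (himg.product himg) (fun p => |p.1 i - p.2 i|)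
          ≤ ∑ _i : Fin k, c₂ := by
            apply Finset.sum_le_sum
            intro i _
            apply Finset.sup'_le
            rintro ⟨a, b⟩ hab
            rw [Finset.mem_product] at hab
            obtain ⟨x, -, hx⟩ := Finset.mem_image.mp hab.1
            obtain ⟨y, -, hy⟩ := Finset.mem_image.mp hab.2
            subst hx hy
            have hpair : |φ x i - φ y i| ≤ l1Div (({x, y} : Finset X).image φ) := by
              apply pair_le_l1Div _ (by simp : (({x, y} : Finset X).image φ).Nonempty)
              · exact Finset.mem_image.mpr ⟨x, by simp, rfl⟩
              · exact Finset.mem_image.mpr ⟨y, by simp, rfl⟩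
            have h2 := (hemb {x, y}).2
            have hcd : cardDiv ({x, y} : Finset X) ≤ 1 := by
              rw [cardDiv, if_pos (by simp)]
              have : (({x, y} : Finset X).card : ℝ) ≤ 2 := by
                exact_mod_cast Finset.card_insert_le x {y} |>.trans (by simp)
              linarith
            calc |φ x i - φ y i| ≤ c₂ * cardDiv ({x, y} : Finset X) := hpair.trans h2
              _ ≤ c₂ * 1 := by nlinarith
              _ = c₂ := mul_one c₂
        _ = (k : ℝ) * c₂ := by simp [mul_comm]
    rw [hcard] at hlow
    have : ((Fintype.card X : ℝ) - 1) ≤ c₁ * ((k : ℝ) * c₂) := by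
      have := hlow.trans hup
      calc ((Fintype.card X : ℝ) - 1) = c₁ * ((1 / c₁) * ((Fintype.card X : ℝ) - 1)) := by
            field_simp
        _ ≤ c₁ * ((k : ℝ) * c₂) := by nlinarith
    rw [div_le_iff₀ hkR]
    nlinarith
  · rw [Finset.not_nonempty_iff_eq_empty] at hn
    have : Fintype.card X = 0 := by
      rw [← Finset.card_univ, hn, Finset.card_empty]
    rw [this]
    have : ((0 : ℕ) : ℝ) - 1 = -1 := by norm_num
    rw [this]
    have : (-1 : ℝ) / k < 0 := div_neg_of_neg_of_pos (by norm_num) hkR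
    nlinarith
end
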